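/- For 0 < α < 1 and any odd natural number N, the partial sum ∑_{k=0}^{N} C(α,k) · k(k−1) is nonnegative; consequently ∑_{k=0}^{N} C(α,k)·k ≤ ∑_{k=0}^{N} C(α,k)·k². -/

import Mathlib

/-- Generalized binomial coefficient `C(α, k) = α(α−1)⋯(α−k+1)/k!` for real `α`. -/
noncomputable def genBinom (α : ℝ) (k : ℕ) : ℝ :=
  (∏ i ∈ Finset.range k, (α - i)) / (Nat.factorial k)

lemma genBinom_succ (α : ℝ) (k : ℕ) :
    genBinom α (k + 1) = genBinom α k * (α - k) / (k + 1) := by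
  have h1 : (Nat.factorial k : ℝ) ≠ 0 := by
    exact_mod_cast Nat.factorial_ne_zero k
  have h2 : ((k : ℝ) + 1) ≠ 0 := by positivity
  simp only [genBinom, Finset.prod_range_succ, Nat.factorial_succ]
  push_cast
  field_simp

lemma genBinom_sign (α : ℝ) (h0 : 0 < α) (h1 : α < 1) (k : ℕ) :
    0 ≤ (-1 : ℝ) ^ k * genBinom α (k + 1) := by
  induction k with
  | zero => simp [genBinom]; linarith
  | succ n ih =>
    rw [genBinom_succ]
    have hn : (0 : ℝ) ≤ n := Nat.cast_nonneg n
    have key : (-1 : ℝ) ^ (n + 1) * (genBinom α (n + 1) * (α - (n + 1 : ℕ)) / ((n + 1 : ℕ) + 1))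
        = ((-1 : ℝ) ^ n * genBinom α (n + 1)) * (((n : ℝ) + 1 - α) / ((n : ℝ) + 2)) := by
      push_cast; ring
    rw [key]
    apply mul_nonneg ih
    apply div_nonneg <;> linarith

lemma genBinom_even_nonpos (α : ℝ) (h0 : 0 < α) (h1 : α < 1) (m : ℕ) :
    genBinom α (2 * m + 2) ≤ 0 := by
  have := genBinom_sign α h0 h1 (2 * m + 1)
  have hpow : (-1 : ℝ) ^ (2 * m + 1) = -1 := by
    rw [pow_succ, pow_mul]; norm_num
  rw [hpow] at this
  linarith

lemma pair_nonneg (α : ℝ) (h0 : 0 < α) (h1 : α < 1) (m : ℕ) :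
    0 ≤ genBinom α (2 * m + 2) * (((2 * m + 2 : ℕ) : ℝ) * (((2 * m + 2 : ℕ) : ℝ) - 1))
      + genBinom α (2 * m + 3) * (((2 * m + 3 : ℕ) : ℝ) * (((2 * m + 3 : ℕ) : ℝ) - 1)) := by
  have hg : genBinom α (2 * m + 2) ≤ 0 := genBinom_even_nonpos α h0 h1 m
  have hsucc : genBinom α (2 * m + 3)
      = genBinom α (2 * m + 2) * (α - ((2 * m + 2 : ℕ) : ℝ)) / (((2 * m + 2 : ℕ) : ℝ) + 1) := by
    exact genBinom_succ α (2 * m + 2)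
  have hne : ((2 * (m : ℝ) + 2) + 1) ≠ 0 := by positivity
  have hval : genBinom α (2 * m + 2) * (((2 * m + 2 : ℕ) : ℝ) * (((2 * m + 2 : ℕ) : ℝ) - 1))
      + genBinom α (2 * m + 3) * (((2 * m + 3 : ℕ) : ℝ) * (((2 * m + 3 : ℕ) : ℝ) - 1))
      = (genBinom α (2 * m + 2) * (α - 1)) * (2 * (m : ℝ) + 2) := by
    rw [hsucc]
    push_cast
    field_simp
    ring
  rw [hval]
  apply mul_nonneg
  · nlinarith [hg]
  · positivity

lemma sum_nonneg_aux (α : ℝ) (h0 : 0 < α) (h1 : α < 1) (m : ℕ) :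
    0 ≤ ∑ k ∈ Finset.range (2 * m + 2), genBinom α k * ((k : ℝ) * ((k : ℝ) - 1)) := by
  induction m with
  | zero => simp [Finset.sum_range_succ]
  | succ n ih =>
    have hrange : 2 * (n + 1) + 2 = (2 * n + 2) + 1 + 1 := by ring
    rw [hrange, Finset.sum_range_succ, Finset.sum_range_succ]
    have := pair_nonneg α h0 h1 n
    have h3 : (2 * n + 2) + 1 = 2 * n + 3 := by ring
    rw [h3]
    linarith

/-- For `0 < α < 1` and odd `N`, `∑_{k=0}^{N} C(α,k)·k(k−1) ≥ 0`; consequently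
`∑_{k=0}^{N} C(α,k)·k ≤ ∑_{k=0}^{N} C(α,k)·k²`. -/
theorem binom_sum_k_sq_sub_k_nonneg
    (α : ℝ) (h0 : 0 < α) (h1 : α < 1) (N : ℕ) (hN : Odd N) :
    0 ≤ ∑ k ∈ Finset.range (N + 1), genBinom α k * ((k : ℝ) * ((k : ℝ) - 1)) ∧
    ∑ k ∈ Finset.range (N + 1), genBinom α k * k
      ≤ ∑ k ∈ Finset.range (N + 1), genBinom α k * (k : ℝ) ^ 2 := by
  obtain ⟨m, hm⟩ := hN
  have hN1 : N + 1 = 2 * m + 2 := by omega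
  have hmain : 0 ≤ ∑ k ∈ Finset.range (N + 1), genBinom α k * ((k : ℝ) * ((k : ℝ) - 1)) := by
    rw [hN1]; exact sum_nonneg_aux α h0 h1 m
  refine ⟨hmain, ?_⟩
  have hsplit : ∑ k ∈ Finset.range (N + 1), genBinom α k * (k : ℝ) ^ 2
      = ∑ k ∈ Finset.range (N + 1),
          (genBinom α k * ((k : ℝ) * ((k : ℝ) - 1)) + genBinom α k * k) := by
    apply Finset.sum_congr rfl
    intro k _
    ring
  rw [hsplit, Finset.sum_add_distrib]
  linarith
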